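/- arXiv:2102.05842 — 2 statements merged into one kernel-verified Lean document; each statement's English description precedes it below -/
import Mathlib

section
/- For every positive integer n, g⁻¹(n) = ∑_{d∣n} μ(n/d) · λ(d) · C_Ω(d). -/
/-- `C_Ω(n) = Ω(n)! / (α₁! ⋯ α_r!)` is the multinomial coefficient of the exponents in the
prime factorization `n = p₁^{α₁} ⋯ p_r^{α_r}`; by convention `C_Ω(1) = 1`. -/
noncomputable def COmega (n : ℕ) : ℝ :=
  ((ArithmeticFunction.cardFactors n).factorial : ℝ) /
    ∏ p ∈ n.primeFactors, ((n.factorization p).factorial : ℝ)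

section Stmt9Aux

open ArithmeticFunction Finset

/-- `Ω n` is the sum of the exponents in the prime factorization. -/
lemma cardFactors_eq_sum_factorization (n : ℕ) :
    ArithmeticFunction.cardFactors n = ∑ p ∈ n.primeFactors, n.factorization p := by
  rw [ArithmeticFunction.cardFactors_apply, ← Multiset.coe_card,
    ← Multiset.toFinset_sum_count_eq]
  refine Finset.sum_congr rfl fun p hp => ?_
  rw [Multiset.coe_count, Nat.primeFactorsList_count_eq]

lemma cardFactors_div_prime {n p : ℕ} (hn : n ≠ 0) (hp : p ∈ n.primeFactors) :
    ArithmeticFunction.cardFactors (n / p) + 1 = ArithmeticFunction.cardFactors n := by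
  obtain ⟨hpp, hpd, -⟩ := Nat.mem_primeFactors.mp hp
  have h1 : n / p * p = n := Nat.div_mul_cancel hpd
  have h2 : n / p ≠ 0 := by
    intro h; rw [h, zero_mul] at h1; exact hn h1.symm
  calc ArithmeticFunction.cardFactors (n / p) + 1
      = ArithmeticFunction.cardFactors (n / p) + ArithmeticFunction.cardFactors p := by
        rw [ArithmeticFunction.cardFactors_apply_prime hpp]
    _ = ArithmeticFunction.cardFactors (n / p * p) :=
        (ArithmeticFunction.cardFactors_mul h2 hpp.ne_zero).symm
    _ = ArithmeticFunction.cardFactors n := by rw [h1]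

lemma factorization_div_prime {n p : ℕ} (hp : p.Prime) (hpd : p ∣ n) (q : ℕ) :
    (n / p).factorization q = if q = p then n.factorization q - 1 else n.factorization q := by
  rw [Nat.factorization_div hpd, hp.factorization]
  simp only [Finsupp.tsub_apply, Finsupp.single_apply]
  rcases eq_or_ne q p with rfl | h
  · simp
  · rw [if_neg h, if_neg (Ne.symm h), Nat.sub_zero]

lemma COmega_div_prime {n p : ℕ} (hn : n ≠ 0) (hp : p ∈ n.primeFactors) :
    COmega (n / p) =
      (n.factorization p : ℝ) *
        (((ArithmeticFunction.cardFactors n - 1).factorial : ℝ) /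
          ∏ q ∈ n.primeFactors, ((n.factorization q).factorial : ℝ)) := by
  obtain ⟨hpp, hpd, -⟩ := Nat.mem_primeFactors.mp hp
  have hΩ := cardFactors_div_prime hn hp
  have hαp : 1 ≤ n.factorization p := by
    have : p ∈ n.factorization.support := by rwa [Nat.support_factorization]
    have := Finsupp.mem_support_iff.mp this
    omega
  have hsub : (n / p).primeFactors ⊆ n.primeFactors :=
    Nat.primeFactors_mono (Nat.div_dvd_of_dvd hpd) hn
  -- extend the product in the denominator of `COmega (n/p)` over `n.primeFactors`
  have hprod : (∏ q ∈ (n / p).primeFactors, (((n / p).factorization q).factorial : ℝ)) =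
      ∏ q ∈ n.primeFactors, (((n / p).factorization q).factorial : ℝ) := by
    refine Finset.prod_subset hsub fun q hq hq' => ?_
    have : (n / p).factorization q = 0 := by
      rw [← Nat.support_factorization] at hq'
      exact Finsupp.notMem_support_iff.mp hq'
    simp [this]
  -- relate the two denominators
  have hden : (n.factorization p : ℝ) *
      ∏ q ∈ n.primeFactors, (((n / p).factorization q).factorial : ℝ) =
      ∏ q ∈ n.primeFactors, ((n.factorization q).factorial : ℝ) := by
    rw [← Finset.prod_erase_mul _ _ hp, ← Finset.prod_erase_mul _ _ hp]
    have h1 : ∀ q ∈ n.primeFactors.erase p,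
        (((n / p).factorization q).factorial : ℝ) = ((n.factorization q).factorial : ℝ) := by
      intro q hq
      have hqne : q ≠ p := Finset.ne_of_mem_erase hq
      rw [factorization_div_prime hpp hpd, if_neg hqne]
    rw [Finset.prod_congr rfl h1]
    have h2 : (n / p).factorization p = n.factorization p - 1 := by
      rw [factorization_div_prime hpp hpd, if_pos rfl]
    rw [h2]
    have hmul : (n.factorization p : ℝ) * ((n.factorization p - 1).factorial : ℝ) =
        ((n.factorization p).factorial : ℝ) := by
      rw [← Nat.cast_mul]
      congr 1
      have h3 : n.factorization p = (n.factorization p - 1) + 1 := by omega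
      calc n.factorization p * (n.factorization p - 1).factorial
          = ((n.factorization p - 1) + 1) * (n.factorization p - 1).factorial := by rw [← h3]
        _ = ((n.factorization p - 1) + 1).factorial := (Nat.factorial_succ _).symm
        _ = (n.factorization p).factorial := by rw [← h3]
    rw [← hmul]
    ring
  have hΩ' : ArithmeticFunction.cardFactors (n / p) =
      ArithmeticFunction.cardFactors n - 1 := by omega
  have hdenne : (∏ q ∈ n.primeFactors, ((n.factorization q).factorial : ℝ)) ≠ 0 := by
    refine Finset.prod_ne_zero_iff.mpr fun q _ => ?_
    exact_mod_cast (Nat.factorial_pos _).ne'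
  have hdenne2 : (∏ q ∈ n.primeFactors, (((n / p).factorization q).factorial : ℝ)) ≠ 0 := by
    refine Finset.prod_ne_zero_iff.mpr fun q _ => ?_
    exact_mod_cast (Nat.factorial_pos _).ne'
  have hαpne : (n.factorization p : ℝ) ≠ 0 := by
    exact_mod_cast (by omega : n.factorization p ≠ 0)
  rw [COmega, hΩ', hprod, ← hden]
  field_simp

/-- The key combinatorial identity: for `n ≥ 2`,
`∑_{p ∣ n prime} C_Ω(n/p) = C_Ω(n)`. -/
lemma sum_COmega_div (n : ℕ) (hn : 2 ≤ n) :
    ∑ p ∈ n.primeFactors, COmega (n / p) = COmega n := by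
  have hn0 : n ≠ 0 := by omega
  have hΩpos : 1 ≤ ArithmeticFunction.cardFactors n := by
    rw [ArithmeticFunction.cardFactors_apply]
    have h : n.primeFactorsList ≠ [] := by
      simp only [Ne, Nat.primeFactorsList_eq_nil]; omega
    exact List.length_pos_iff.mpr h
  calc ∑ p ∈ n.primeFactors, COmega (n / p)
      = ∑ p ∈ n.primeFactors, (n.factorization p : ℝ) *
          (((ArithmeticFunction.cardFactors n - 1).factorial : ℝ) /
            ∏ q ∈ n.primeFactors, ((n.factorization q).factorial : ℝ)) := by
        exact Finset.sum_congr rfl fun p hp => COmega_div_prime hn0 hp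
    _ = (∑ p ∈ n.primeFactors, (n.factorization p : ℝ)) *
          (((ArithmeticFunction.cardFactors n - 1).factorial : ℝ) /
            ∏ q ∈ n.primeFactors, ((n.factorization q).factorial : ℝ)) := by
        rw [Finset.sum_mul]
    _ = COmega n := by
        rw [← Nat.cast_sum, ← _root_.cardFactors_eq_sum_factorization]
        rw [COmega]
        rw [mul_div_assoc']
        congr 1
        rw [← Nat.cast_mul]
        congr 1
        rw [← Nat.succ_pred_eq_of_pos (by omega : 0 < ArithmeticFunction.cardFactors n),
          Nat.factorial_succ]
        simp

/-- The auxiliary arithmetic function `H n = (-1)^{Ω n} C_Ω(n)`. -/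
noncomputable def Hfun : ArithmeticFunction ℝ :=
  ⟨fun n => if n = 0 then 0 else (-1) ^ (ArithmeticFunction.cardFactors n) * COmega n, by simp⟩

lemma Hfun_apply {n : ℕ} (hn : n ≠ 0) :
    Hfun n = (-1) ^ (ArithmeticFunction.cardFactors n) * COmega n := by
  simp [Hfun, hn]

lemma COmega_one : COmega 1 = 1 := by simp [COmega]

lemma Hfun_one : Hfun 1 = 1 := by
  rw [Hfun_apply one_ne_zero, COmega_one]
  simp

/-- The indicator function of the primes. -/
noncomputable def Afun : ArithmeticFunction ℝ :=
  ⟨fun n => if n.Prime then 1 else 0, by simp [Nat.not_prime_zero]⟩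

lemma Afun_apply (n : ℕ) : Afun n = if n.Prime then 1 else 0 := rfl

lemma divisors_filter_prime (n : ℕ) (hn : n ≠ 0) :
    n.divisors.filter Nat.Prime = n.primeFactors := by
  ext p
  simp only [Finset.mem_filter, Nat.mem_divisors, Nat.mem_primeFactors]
  tauto

/-- `ω = ζ * A` over ℝ. -/
lemma omega_eq_zeta_mul_A :
    ((ArithmeticFunction.cardDistinctFactors : ArithmeticFunction ℕ) : ArithmeticFunction ℝ) =
      (ArithmeticFunction.zeta : ArithmeticFunction ℕ) * Afun := by
  ext n
  rcases eq_or_ne n 0 with rfl | hn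
  · simp
  rw [ArithmeticFunction.coe_zeta_mul_apply]
  rw [ArithmeticFunction.natCoe_apply]
  rw [ArithmeticFunction.cardDistinctFactors_apply]
  have : ∑ i ∈ n.divisors, Afun i =
      ∑ i ∈ n.divisors.filter Nat.Prime, (1 : ℝ) := by
    rw [Finset.sum_filter]
    exact Finset.sum_congr rfl fun i _ => by rw [Afun_apply]
  rw [this, divisors_filter_prime n hn, Finset.sum_const, nsmul_eq_mul, mul_one]
  rw [Nat.primeFactors, List.card_toFinset]

/-- The key identity `H + A * H = 1`. -/
lemma Hfun_add_A_mul_Hfun : Hfun + Afun * Hfun = 1 := by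
  ext n
  rcases eq_or_ne n 0 with rfl | hn0
  · simp
  rcases eq_or_ne n 1 with rfl | hn1
  · simp [Hfun_one, Afun_apply, Nat.not_prime_one]
  have hn2 : 2 ≤ n := by omega
  have hΩpos : 1 ≤ ArithmeticFunction.cardFactors n := by
    rw [ArithmeticFunction.cardFactors_apply]
    have h : n.primeFactorsList ≠ [] := by
      simp only [Ne, Nat.primeFactorsList_eq_nil]; omega
    exact List.length_pos_iff.mpr h
  have hone : (1 : ArithmeticFunction ℝ) n = 0 := by
    rw [ArithmeticFunction.one_apply]
    simp [hn1]
  rw [ArithmeticFunction.add_apply, hone]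
  have hAH : (Afun * Hfun) n = ∑ p ∈ n.primeFactors, Hfun (n / p) := by
    rw [ArithmeticFunction.mul_apply,
      Nat.sum_divisorsAntidiagonal (f := fun d e => Afun d * Hfun e)]
    have : ∑ d ∈ n.divisors, Afun d * Hfun (n / d) =
        ∑ d ∈ n.divisors.filter Nat.Prime, Hfun (n / d) := by
      rw [Finset.sum_filter]
      refine Finset.sum_congr rfl fun d _ => ?_
      rw [Afun_apply]
      split_ifs <;> simp
    rw [this, divisors_filter_prime n hn0]
  rw [hAH]
  have hsum : ∑ p ∈ n.primeFactors, Hfun (n / p) =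
      (-1) ^ (ArithmeticFunction.cardFactors n - 1) * COmega n := by
    have : ∀ p ∈ n.primeFactors, Hfun (n / p) =
        (-1) ^ (ArithmeticFunction.cardFactors n - 1) * COmega (n / p) := by
      intro p hp
      have hΩ := cardFactors_div_prime hn0 hp
      have hdvd : p ∣ n := (Nat.mem_primeFactors.mp hp).2.1
      have hne : n / p ≠ 0 := by
        have := Nat.div_mul_cancel hdvd
        intro h; rw [h, zero_mul] at this; exact hn0 this.symm
      rw [Hfun_apply hne]
      congr 2
      omega
    rw [Finset.sum_congr rfl this, ← Finset.mul_sum, sum_COmega_div n hn2]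
  rw [hsum, Hfun_apply hn0]
  have h1 : (-1 : ℝ) ^ (ArithmeticFunction.cardFactors n) =
      -(-1 : ℝ) ^ (ArithmeticFunction.cardFactors n - 1) := by
    conv_lhs => rw [show ArithmeticFunction.cardFactors n =
      (ArithmeticFunction.cardFactors n - 1) + 1 from by omega]
    rw [pow_succ]; ring
  rw [h1]
  ring

end Stmt9Aux

/-- Let `g` be the arithmetic function with `g(n) = ω(n) + 1` for `n ≥ 1`
and let `ginv` be its Dirichlet inverse (characterized by `g * ginv = 1`).  Then for every
positive integer `n`, `ginv(n) = ∑_{d ∣ n} μ(n/d) · λ(d) · C_Ω(d)`, where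
`λ(d) = (−1)^{Ω(d)}` is the Liouville function. -/
theorem stmt_9 (g ginv : ArithmeticFunction ℝ)
    (hg : ∀ n : ℕ, 0 < n → g n = (ArithmeticFunction.cardDistinctFactors n : ℝ) + 1)
    (hginv : g * ginv = 1) (n : ℕ) (hn : 0 < n) :
    ginv n =
      ∑ d ∈ n.divisors,
        (ArithmeticFunction.moebius (n / d) : ℝ) *
          ((-1 : ℝ) ^ (ArithmeticFunction.cardFactors d) * COmega d) := by
  classical
  -- `g = ζ + ω` over ℝ
  have hgdecomp : g =
      ((ArithmeticFunction.zeta : ArithmeticFunction ℕ) : ArithmeticFunction ℝ) +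
        ((ArithmeticFunction.cardDistinctFactors : ArithmeticFunction ℕ) :
          ArithmeticFunction ℝ) := by
    ext m
    rcases eq_or_ne m 0 with rfl | hm
    · simp
    have hm' : 0 < m := Nat.pos_of_ne_zero hm
    rw [hg m hm', ArithmeticFunction.add_apply, ArithmeticFunction.natCoe_apply,
      ArithmeticFunction.natCoe_apply, ArithmeticFunction.zeta_apply, if_neg hm]
    push_cast
    ring
  -- `g * (μ * H) = 1`
  have hX : g * (((ArithmeticFunction.moebius : ArithmeticFunction ℤ) :
      ArithmeticFunction ℝ) * Hfun) = 1 := by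
    rw [hgdecomp, omega_eq_zeta_mul_A]
    have hzm : ((ArithmeticFunction.zeta : ArithmeticFunction ℕ) : ArithmeticFunction ℝ) *
        ((ArithmeticFunction.moebius : ArithmeticFunction ℤ) : ArithmeticFunction ℝ) = 1 :=
      ArithmeticFunction.coe_zeta_mul_coe_moebius
    calc (((ArithmeticFunction.zeta : ArithmeticFunction ℕ) : ArithmeticFunction ℝ) +
          ((ArithmeticFunction.zeta : ArithmeticFunction ℕ) : ArithmeticFunction ℝ) * Afun) *
          (((ArithmeticFunction.moebius : ArithmeticFunction ℤ) :
            ArithmeticFunction ℝ) * Hfun)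
        = (((ArithmeticFunction.zeta : ArithmeticFunction ℕ) : ArithmeticFunction ℝ) *
            ((ArithmeticFunction.moebius : ArithmeticFunction ℤ) : ArithmeticFunction ℝ)) *
            (Hfun + Afun * Hfun) := by ring
      _ = Hfun + Afun * Hfun := by rw [hzm, one_mul]
      _ = 1 := Hfun_add_A_mul_Hfun
  -- therefore `ginv = μ * H`
  have hginv_eq : ginv = ((ArithmeticFunction.moebius : ArithmeticFunction ℤ) :
      ArithmeticFunction ℝ) * Hfun := by
    calc ginv = 1 * ginv := (one_mul _).symm
      _ = (g * (((ArithmeticFunction.moebius : ArithmeticFunction ℤ) :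
            ArithmeticFunction ℝ) * Hfun)) * ginv := by rw [hX]
      _ = (((ArithmeticFunction.moebius : ArithmeticFunction ℤ) :
            ArithmeticFunction ℝ) * Hfun) * (g * ginv) := by ring
      _ = ((ArithmeticFunction.moebius : ArithmeticFunction ℤ) :
            ArithmeticFunction ℝ) * Hfun := by rw [hginv, mul_one]
  rw [hginv_eq, ArithmeticFunction.mul_apply,
    Nat.sum_divisorsAntidiagonal' (f := fun d e =>
      (((ArithmeticFunction.moebius : ArithmeticFunction ℤ) : ArithmeticFunction ℝ) d) *
        Hfun e)]
  refine Finset.sum_congr rfl fun d hd => ?_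
  have hd0 : d ≠ 0 := by
    rcases Nat.mem_divisors.mp hd with ⟨_, hn0⟩
    rintro rfl
    exact hn0 (Nat.eq_zero_of_zero_dvd (by assumption))
  rw [Hfun_apply hd0, ArithmeticFunction.intCoe_apply]
end

section
/- For every integer x ≥ 1, M(x) = G⁻¹(x) + ∑_{k=1}^{⌊x/2⌋} G⁻¹(k) · ( π(⌊x/k⌋) − π(⌊x/(k+1)⌋) ), where π(y) is the number of primes not exceeding y. -/
open ArithmeticFunction Finset
open scoped ArithmeticFunction.zeta ArithmeticFunction.omega

noncomputable def chiP : ArithmeticFunction ℝ :=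
  ⟨fun n => if n.Prime then 1 else 0, by simp [Nat.not_prime_zero]⟩

lemma chiP_apply (n : ℕ) : chiP n = if n.Prime then 1 else 0 := rfl

lemma g_eq (g : ArithmeticFunction ℝ)
    (hg : ∀ n : ℕ, 0 < n → g n = (ArithmeticFunction.cardDistinctFactors n : ℝ) + 1) :
    g = (chiP + 1) * ζ := by
  ext n
  rcases Nat.eq_zero_or_pos n with rfl | hn
  · simp
  rw [hg n hn, mul_apply,
    Nat.sum_divisorsAntidiagonal (f := fun d e => (chiP + 1) d * ((ζ : ArithmeticFunction ℝ) e))]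
  have key : ∀ d ∈ n.divisors,
      (chiP + 1) d * ((ζ : ArithmeticFunction ℝ) (n / d))
        = (if d.Prime then (1:ℝ) else 0) + (if d = 1 then 1 else 0) := by
    intro d hd
    have hd' := Nat.mem_divisors.mp hd
    have hdpos : 0 < d := Nat.pos_of_mem_divisors hd
    have h2 : n / d ≠ 0 := Nat.div_ne_zero_iff.mpr ⟨hdpos.ne', Nat.le_of_dvd hn hd'.1⟩
    rw [ArithmeticFunction.add_apply, ArithmeticFunction.one_apply, natCoe_apply,
      zeta_apply_ne h2, chiP_apply]
    push_cast
    ring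
  rw [Finset.sum_congr rfl key, Finset.sum_add_distrib]
  have h1 : ∑ d ∈ n.divisors, (if d = 1 then (1:ℝ) else 0) = 1 := by
    rw [Finset.sum_ite_eq' n.divisors 1 (fun _ => (1:ℝ))]
    simp [Nat.one_mem_divisors.mpr hn.ne']
  have h2 : ∑ d ∈ n.divisors, (if d.Prime then (1:ℝ) else 0) = (ω n : ℝ) := by
    rw [Finset.sum_ite, Finset.sum_const_zero, add_zero]
    simp only [Finset.sum_const, nsmul_eq_mul, mul_one]
    rw [← Nat.primeFactors_eq_to_filter_divisors_prime, cardDistinctFactors_apply,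
      Nat.primeFactors, List.card_toFinset]
  rw [h1, h2]

theorem hyperbola (x : ℕ) (F : ℕ → ℕ → ℝ) :
    ∑ n ∈ Icc 1 x, ∑ p ∈ n.divisorsAntidiagonal, F p.1 p.2
      = ∑ e ∈ Icc 1 x, ∑ d ∈ Icc 1 (x / e), F d e := by
  rw [Finset.sum_sigma', Finset.sum_sigma']
  apply Finset.sum_nbij' (fun p => (⟨p.2.2, p.2.1⟩ : (_ : ℕ) × ℕ))
    (fun q => (⟨q.2 * q.1, q.2, q.1⟩ : (_ : ℕ) × (ℕ × ℕ)))
  · rintro ⟨n, d, e⟩ h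
    simp only [Finset.mem_sigma, Finset.mem_Icc, Nat.mem_divisorsAntidiagonal] at h ⊢
    obtain ⟨⟨h1, h2⟩, h3, h4⟩ := h
    have hd : 0 < d := Nat.pos_of_ne_zero (by rintro rfl; simp at h3; omega)
    have he : 0 < e := Nat.pos_of_ne_zero (by rintro rfl; simp at h3; omega)
    refine ⟨⟨he, ?_⟩, hd, ?_⟩
    · calc e ≤ d * e := Nat.le_mul_of_pos_left e hd
        _ ≤ x := h3 ▸ h2
    · rw [Nat.le_div_iff_mul_le he]; exact h3 ▸ h2
  · rintro ⟨e, d⟩ h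
    simp only [Finset.mem_sigma, Finset.mem_Icc, Nat.mem_divisorsAntidiagonal] at h ⊢
    obtain ⟨⟨h1, h2⟩, h3, h4⟩ := h
    have hde : d * e ≤ x := (Nat.le_div_iff_mul_le h1).mp h4
    exact ⟨⟨Nat.one_le_iff_ne_zero.mpr (by positivity), hde⟩, trivial, by positivity⟩
  · rintro ⟨n, d, e⟩ h
    simp only [Finset.mem_sigma, Finset.mem_Icc, Nat.mem_divisorsAntidiagonal] at h
    obtain ⟨-, h3, -⟩ := h
    cases h3; rfl
  · rintro ⟨e, d⟩ h; rfl
  · rintro ⟨n, d, e⟩ h; rfl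

lemma chiP_sum (m : ℕ) : ∑ d ∈ Icc 1 m, chiP d = (m.primeCounting : ℝ) := by
  simp only [chiP_apply]
  rw [Finset.sum_ite, Finset.sum_const_zero, add_zero]
  simp only [Finset.sum_const, nsmul_eq_mul, mul_one]
  have : {d ∈ Icc 1 m | d.Prime} = m.succ.primesBelow := by
    ext a
    simp only [Finset.mem_filter, Finset.mem_Icc, Nat.mem_primesBelow, Nat.lt_succ_iff]
    constructor
    · rintro ⟨⟨-, h2⟩, h3⟩; exact ⟨h2, h3⟩
    · rintro ⟨h1, h2⟩; exact ⟨⟨h2.one_lt.le, h1⟩, h2⟩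
  rw [this, Nat.primesBelow_card_eq_primeCounting', Nat.primeCounting]

lemma telescope (f : ℕ → ℝ) (e K : ℕ) (he : e ≤ K) :
    ∑ k ∈ Icc e K, (f k - f (k + 1)) = f e - f (K + 1) := by
  rw [← Finset.Ico_add_one_right_eq_Icc, Finset.sum_Ico_eq_sum_range]
  have h := Finset.sum_range_sub' (fun i => f (e + i)) (K + 1 - e)
  simp only [← Nat.add_assoc, Nat.add_zero] at h
  rw [h]
  congr 2
  omega

lemma swap_tri (K : ℕ) (t : ℕ → ℕ → ℝ) :
    ∑ e ∈ Icc 1 K, ∑ k ∈ Icc e K, t e k = ∑ k ∈ Icc 1 K, ∑ e ∈ Icc 1 k, t e k := by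
  rw [Finset.sum_sigma', Finset.sum_sigma']
  apply Finset.sum_nbij' (fun p => (⟨p.2, p.1⟩ : (_ : ℕ) × ℕ))
    (fun p => (⟨p.2, p.1⟩ : (_ : ℕ) × ℕ))
  · rintro ⟨e, k⟩ h
    simp only [Finset.mem_sigma, Finset.mem_Icc] at h ⊢; omega
  · rintro ⟨k, e⟩ h
    simp only [Finset.mem_sigma, Finset.mem_Icc] at h ⊢; omega
  · rintro ⟨e, k⟩ h; rfl
  · rintro ⟨k, e⟩ h; rfl
  · rintro ⟨e, k⟩ h; rfl

set_option maxHeartbeats 1000000 in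
/-- Let `g` be the arithmetic function with `g(n) = ω(n) + 1` for `n ≥ 1`,
let `ginv` be its Dirichlet inverse (characterized by `g * ginv = 1`), and let
`G⁻¹(x) = ∑_{n ≤ x} ginv(n)`.  Then for every `x ≥ 1`,
`M(x) = G⁻¹(x) + ∑_{k=1}^{⌊x/2⌋} G⁻¹(k) (π(⌊x/k⌋) − π(⌊x/(k+1)⌋))`, where `M` is the
Mertens function and `π` the prime counting function. -/
theorem stmt_14 (g ginv : ArithmeticFunction ℝ)
    (hg : ∀ n : ℕ, 0 < n → g n = (ArithmeticFunction.cardDistinctFactors n : ℝ) + 1)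
    (hginv : g * ginv = 1) (x : ℕ) (hx : 1 ≤ x) :
    ((∑ n ∈ Finset.Icc 1 x, ArithmeticFunction.moebius n : ℤ) : ℝ) =
      (∑ n ∈ Finset.Icc 1 x, ginv n) +
        ∑ k ∈ Finset.Icc 1 (x / 2),
          (∑ n ∈ Finset.Icc 1 k, ginv n) *
            ((Nat.primeCounting (x / k) : ℝ) - (Nat.primeCounting (x / (k + 1)) : ℝ)) := by
  set K := x / 2 with hK
  have hmu : ((moebius : ArithmeticFunction ℤ) : ArithmeticFunction ℝ)
      = ginv + chiP * ginv := by
    calc ((moebius : ArithmeticFunction ℤ) : ArithmeticFunction ℝ)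
        = ↑(moebius : ArithmeticFunction ℤ) * (g * ginv) := by rw [hginv, mul_one]
      _ = (↑(moebius : ArithmeticFunction ℤ) * ζ) * ((chiP + 1) * ginv) := by
          rw [g_eq g hg]; ring
      _ = ginv + chiP * ginv := by rw [coe_moebius_mul_coe_zeta, one_mul]; ring
  have hL : ((∑ n ∈ Finset.Icc 1 x, ArithmeticFunction.moebius n : ℤ) : ℝ)
      = ∑ n ∈ Icc 1 x, ((moebius : ArithmeticFunction ℤ) : ArithmeticFunction ℝ) n := by
    push_cast [intCoe_apply]
    rfl
  rw [hL, hmu]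
  simp only [ArithmeticFunction.add_apply, Finset.sum_add_distrib]
  congr 1
  -- main middle computation
  calc ∑ n ∈ Icc 1 x, (chiP * ginv) n
      = ∑ n ∈ Icc 1 x, ∑ p ∈ n.divisorsAntidiagonal, chiP p.1 * ginv p.2 := by
        simp only [mul_apply]
    _ = ∑ e ∈ Icc 1 x, ∑ d ∈ Icc 1 (x / e), chiP d * ginv e := hyperbola x (fun d e => chiP d * ginv e)
    _ = ∑ e ∈ Icc 1 x, ((x / e).primeCounting : ℝ) * ginv e := by
        refine Finset.sum_congr rfl fun e _ => ?_
        rw [← Finset.sum_mul, chiP_sum]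
    _ = ∑ e ∈ Icc 1 K, ((x / e).primeCounting : ℝ) * ginv e := by
        refine (Finset.sum_subset (Finset.Icc_subset_Icc_right (by omega)) ?_).symm
        intro e he1 he2
        simp only [Finset.mem_Icc] at he1 he2
        have h2e : x / e < 2 := (Nat.div_lt_iff_lt_mul (by omega)).mpr (by omega)
        have : x / e ≤ 1 := by omega
        rw [Nat.primeCounting_eq_zero_iff.mpr this]
        simp
    _ = ∑ e ∈ Icc 1 K, ∑ k ∈ Icc e K,
          ginv e * (((x / k).primeCounting : ℝ) - ((x / (k+1)).primeCounting : ℝ)) := by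
        refine Finset.sum_congr rfl fun e he => ?_
        simp only [Finset.mem_Icc] at he
        rw [← Finset.mul_sum, telescope (fun k => ((x / k).primeCounting : ℝ)) e K he.2]
        have h2K : x / (K + 1) < 2 := (Nat.div_lt_iff_lt_mul (by omega)).mpr (by omega)
        have : x / (K + 1) ≤ 1 := by omega
        rw [Nat.primeCounting_eq_zero_iff.mpr this]
        push_cast
        ring
    _ = ∑ k ∈ Icc 1 K, (∑ e ∈ Icc 1 k, ginv e) *
          (((x / k).primeCounting : ℝ) - ((x / (k+1)).primeCounting : ℝ)) := by
        rw [swap_tri]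
        refine Finset.sum_congr rfl fun k _ => ?_
        rw [Finset.sum_mul]
end
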